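/- Let X be the 8-element poset with minimal elements c₁,c₂, middle elements b₁,b₂,b₃,b₄, and maximal elements a₁,a₂, where cᵢ < bⱼ and bⱼ < aₖ for all i,k ∈ {1,2} and j ∈ {1,2,3,4}. Then X has no beat points, has height 2, and its order complex has Euler characteristic 8 − (4·2 + 4·2 + 2·2) + (2·4·2) = 4. -/
import Mathlib


/-- Level function for the 8-element poset: `c₁=0, c₂=1` (level 0), `b₁,…,b₄ = 2,…,5`
(level 1), `a₁=6, a₂=7` (level 2). -/
def level18 : Fin 8 → ℕ := ![0, 0, 1, 1, 1, 1, 2, 2]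

/-- The strict order: every element lies below every element of any higher level
(`cᵢ < bⱼ < aₖ` for all `i, k ∈ {1,2}`, `j ∈ {1,2,3,4}`). -/
def lt18 (x y : Fin 8) : Prop := level18 x < level18 y

instance (x y : Fin 8) : Decidable (lt18 x y) := by
  unfold lt18; infer_instance

/-- The associated partial order. -/
def le18 (x y : Fin 8) : Prop := x = y ∨ lt18 x y

instance (x y : Fin 8) : Decidable (le18 x y) := by
  unfold le18; infer_instance

set_option maxRecDepth 10000 in
lemma level18_lt_three (x : Fin 8) : level18 x < 3 := by
  fin_cases x <;> decide

lemma chain_card_le (s : Finset (Fin 8)) (hc : IsChain le18 (s : Set (Fin 8))) :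
    s.card ≤ 3 := by
  have hinj : Set.InjOn level18 (s : Set (Fin 8)) := by
    intro x hx y hy hxy
    by_contra hne
    rcases hc hx hy hne with h | h <;>
      rcases h with h | h
    · exact hne h
    · exact absurd hxy (Nat.ne_of_lt h)
    · exact hne h.symm
    · exact absurd hxy.symm (Nat.ne_of_lt h)
  have hsub : s.image level18 ⊆ Finset.range 3 := by
    intro n hn
    simp only [Finset.mem_image] at hn
    obtain ⟨x, _, rfl⟩ := hn
    exact Finset.mem_range.mpr (level18_lt_three x)
  calc s.card = (s.image level18).card :=
        (Finset.card_image_of_injOn hinj).symm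
    _ ≤ (Finset.range 3).card := Finset.card_le_card hsub
    _ = 3 := Finset.card_range 3

set_option maxRecDepth 100000 in
/-- This 8-point poset (a minimal finite model of `S² ∨ S² ∨ S²`) has no beat points,
has height 2 (maximal chains have cardinality 3), and its order complex has Euler
characteristic `8 - 20 + 16 = 4` (20 edges = comparable pairs, 16 triangles = 3-chains). -/
theorem eight_point_model_no_beat_points_height_euler :
    (∀ x : Fin 8,
      ¬ (∃ m, lt18 m x ∧ ∀ y, lt18 y x → le18 y m) ∧
      ¬ (∃ m, lt18 x m ∧ ∀ y, lt18 x y → le18 m y)) ∧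
    (sSup {c : ℕ | ∃ s : Finset (Fin 8),
        IsChain le18 (s : Set (Fin 8)) ∧ s.card = c} = 3) ∧
    ((Finset.univ : Finset (Fin 8 × Fin 8)).filter (fun p => lt18 p.1 p.2)).card = 20 ∧
    ((Finset.univ : Finset (Fin 8 × Fin 8 × Fin 8)).filter
      (fun t => lt18 t.1 t.2.1 ∧ lt18 t.2.1 t.2.2)).card = 16 ∧
    (8 : ℤ) - 20 + 16 = 4 := by
  refine ⟨?_, ?_, ?_, ?_, by norm_num⟩
  · decide
  · have hmem : 3 ∈ {c : ℕ | ∃ s : Finset (Fin 8),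
        IsChain le18 (s : Set (Fin 8)) ∧ s.card = c} := by
      refine ⟨{0, 2, 6}, ?_, by decide⟩
      intro x hx y hy hne
      simp only [Finset.coe_insert, Finset.coe_singleton, Set.mem_insert_iff,
        Set.mem_singleton_iff] at hx hy
      rcases hx with rfl | rfl | rfl <;> rcases hy with rfl | rfl | rfl <;>
        first | (exact absurd rfl hne) | (left; right; decide) | (right; right; decide)
    have hbdd : ∀ c ∈ {c : ℕ | ∃ s : Finset (Fin 8),
        IsChain le18 (s : Set (Fin 8)) ∧ s.card = c}, c ≤ 3 := by
      rintro c ⟨s, hc, rfl⟩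
      exact chain_card_le s hc
    exact le_antisymm (csSup_le ⟨3, hmem⟩ hbdd)
      (le_csSup ⟨3, hbdd⟩ hmem)
  · decide
  · decide
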